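/- Let L be a closed subspace of a Hilbert space H and v_1, …, v_m vectors such that v_k ∉ L ⊕ ℂv_1 ⊕ ⋯ ⊕ ℂv_{k-1} for each k = 1, …, m. Let L_n be closed subspaces with projections Π_n → Π (projection onto L) strongly, and v_i^{(n)} → v_i in H for each i. Then the orthogonal projections onto L_n + span{v_1^{(n)}, …, v_m^{(n)}} converge strongly to the orthogonal projection onto L ⊕ ℂv_1 ⊕ ⋯ ⊕ ℂv_m. -/

import Mathlib

open ContinuousLinearMap Filter MeasureTheory
open scoped NNReal ENNReal Topology

noncomputable section

variable {H : Type*} [NormedAddCommGroup H] [InnerProductSpace ℂ H] [CompleteSpace H]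
variable {ι : Type*}

/-- `T` is Hilbert–Schmidt w.r.t. the Hilbert basis `e`. -/
def IsHS (e : HilbertBasis ι ℂ H) (T : H →L[ℂ] H) : Prop :=
  Summable fun i => ‖T (e i)‖ ^ 2

/-- Hilbert–Schmidt norm of `T` w.r.t. the Hilbert basis `e`. -/
noncomputable def hsNorm (e : HilbertBasis ι ℂ H) (T : H →L[ℂ] H) : ℝ :=
  Real.sqrt (∑' i, ‖T (e i)‖ ^ 2)

/-- Trace of `T` w.r.t. the Hilbert basis `e`. -/
noncomputable def opTrace (e : HilbertBasis ι ℂ H) (T : H →L[ℂ] H) : ℂ :=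
  ∑' i, (inner ℂ (e i : H) (T (e i)) : ℂ)

/-- `T` is trace class: it is a product of two Hilbert–Schmidt operators. -/
def IsTraceClass (e : HilbertBasis ι ℂ H) (T : H →L[ℂ] H) : Prop :=
  ∃ A B : H →L[ℂ] H, IsHS e A ∧ IsHS e B ∧ T = adjoint A ∘L B

/-- Trace norm `tr √(T* T)` w.r.t. the Hilbert basis `e`. -/
noncomputable def traceNorm (e : HilbertBasis ι ℂ H) (T : H →L[ℂ] H) : ℝ :=
  ∑' i, ((inner ℂ (e i : H) ((CFC.sqrt (adjoint T * T)) (e i)) : ℂ)).re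

/-- The orthogonal projection onto `K`, as an operator `H →L[ℂ] H`. -/
noncomputable def projCLM (K : Submodule ℂ H) [Submodule.HasOrthogonalProjection K] : H →L[ℂ] H :=
  K.subtypeL ∘L K.orthogonalProjectionOnto

lemma projCLM_mem (K : Submodule ℂ H) [Submodule.HasOrthogonalProjection K] (x : H) : projCLM K x ∈ K :=
  SetLike.coe_mem _

lemma sub_projCLM_mem_orth (K : Submodule ℂ H) [Submodule.HasOrthogonalProjection K] (x : H) :
    x - projCLM K x ∈ Kᗮ := Submodule.sub_starProjection_mem_orthogonal x

lemma norm_projCLM_le (K : Submodule ℂ H) [Submodule.HasOrthogonalProjection K] (x : H) :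
    ‖projCLM K x‖ ≤ ‖x‖ := by
  have := K.orthogonalProjectionOnto.le_opNorm x
  calc ‖projCLM K x‖ = ‖K.orthogonalProjectionOnto x‖ := rfl
    _ ≤ ‖K.orthogonalProjectionOnto‖ * ‖x‖ := this
    _ ≤ 1 * ‖x‖ := mul_le_mul_of_nonneg_right (Submodule.orthogonalProjectionOnto_norm_le K) (norm_nonneg x)
    _ = ‖x‖ := one_mul _

lemma projCLM_congr {A B : Submodule ℂ H} [Submodule.HasOrthogonalProjection A]
    [Submodule.HasOrthogonalProjection B] (h : A = B) : projCLM A = projCLM B := by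
  subst h; rfl

lemma key_orth (K : Submodule ℂ H) [Submodule.HasOrthogonalProjection K] {w : H} (hw : w ∈ Kᗮ) (x : H) :
    x - (projCLM K x + projCLM (ℂ ∙ w) x) ∈ (K ⊔ ℂ ∙ w)ᗮ := by
  have hspan : (ℂ ∙ w) ≤ Kᗮ := Submodule.span_le.2 (by simpa using hw)
  rw [Submodule.mem_orthogonal]
  intro u hu
  obtain ⟨a, ha, b, hb, rfl⟩ := Submodule.mem_sup.1 hu
  have h1 : (inner ℂ a (x - projCLM K x) : ℂ) = 0 :=
    (Submodule.mem_orthogonal _ _).1 (sub_projCLM_mem_orth K x) a ha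
  have h2 : (inner ℂ a (projCLM (ℂ ∙ w) x) : ℂ) = 0 :=
    (Submodule.mem_orthogonal _ _).1 (hspan (projCLM_mem _ x)) a ha
  have h3 : (inner ℂ b (x - projCLM (ℂ ∙ w) x) : ℂ) = 0 :=
    (Submodule.mem_orthogonal _ _).1 (sub_projCLM_mem_orth (ℂ ∙ w) x) b hb
  have h4 : (inner ℂ b (projCLM K x) : ℂ) = 0 :=
    (Submodule.mem_orthogonal' _ _).1 (hspan hb) _ (projCLM_mem K x)
  simp only [inner_add_left, inner_sub_right, inner_add_right] at h1 h3 ⊢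
  linear_combination h1 + h3 - h2 - h4

lemma hasOP_sup_orth (K : Submodule ℂ H) [Submodule.HasOrthogonalProjection K] {w : H} (hw : w ∈ Kᗮ) :
    Submodule.HasOrthogonalProjection (K ⊔ ℂ ∙ w) where
  exists_orthogonal x := ⟨projCLM K x + projCLM (ℂ ∙ w) x,
    Submodule.add_mem_sup (projCLM_mem K x) (projCLM_mem _ x), key_orth K hw x⟩

lemma proj_sup (K : Submodule ℂ H) [Submodule.HasOrthogonalProjection K] {w : H} (hw : w ∈ Kᗮ)
    [Submodule.HasOrthogonalProjection (K ⊔ ℂ ∙ w)] (x : H) :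
    projCLM (K ⊔ ℂ ∙ w) x = projCLM K x + projCLM (ℂ ∙ w) x :=
  Submodule.eq_starProjection_of_mem_orthogonal
    (Submodule.add_mem_sup (projCLM_mem K x) (projCLM_mem _ x)) (key_orth K hw x)

lemma sup_span_eq (K : Submodule ℂ H) [Submodule.HasOrthogonalProjection K] (u : H) :
    K ⊔ (ℂ ∙ u) = K ⊔ (ℂ ∙ (u - projCLM K u)) := by
  apply le_antisymm
  · refine sup_le le_sup_left ((Submodule.span_singleton_le_iff_mem _ _).2 ?_)
    have h := Submodule.add_mem_sup (projCLM_mem K u)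
      (Submodule.mem_span_singleton_self (u - projCLM K u))
    simpa using h
  · refine sup_le le_sup_left ((Submodule.span_singleton_le_iff_mem _ _).2 ?_)
    exact Submodule.sub_mem _
      (Submodule.mem_sup_right (Submodule.mem_span_singleton_self u))
      (Submodule.mem_sup_left (projCLM_mem K u))

lemma hasOP_sup_singleton (K : Submodule ℂ H) [Submodule.HasOrthogonalProjection K] (u : H) :
    Submodule.HasOrthogonalProjection (K ⊔ ℂ ∙ u) := by
  rw [sup_span_eq K u]
  exact hasOP_sup_orth K (sub_projCLM_mem_orth K u)

/-- joint strong convergence -/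
lemma proj_tendsto_joint (K : ℕ → Submodule ℂ H) [∀ n, Submodule.HasOrthogonalProjection (K n)]
    (K' : Submodule ℂ H) [Submodule.HasOrthogonalProjection K']
    (hstrong : ∀ x : H, Tendsto (fun n => projCLM (K n) x) atTop (𝓝 (projCLM K' x)))
    {y : ℕ → H} {y' : H} (hy : Tendsto y atTop (𝓝 y')) :
    Tendsto (fun n => projCLM (K n) (y n)) atTop (𝓝 (projCLM K' y')) := by
  rw [tendsto_iff_norm_sub_tendsto_zero]
  have hbound : ∀ n, ‖projCLM (K n) (y n) - projCLM K' y'‖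
      ≤ ‖y n - y'‖ + ‖projCLM (K n) y' - projCLM K' y'‖ := by
    intro n
    calc ‖projCLM (K n) (y n) - projCLM K' y'‖
        = ‖projCLM (K n) (y n - y') + (projCLM (K n) y' - projCLM K' y')‖ := by
          rw [map_sub]; congr 1; abel
      _ ≤ ‖projCLM (K n) (y n - y')‖ + ‖projCLM (K n) y' - projCLM K' y'‖ := norm_add_le _ _
      _ ≤ ‖y n - y'‖ + ‖projCLM (K n) y' - projCLM K' y'‖ := by
          gcongr; exact norm_projCLM_le _ _
  have h0 : Tendsto (fun n => ‖y n - y'‖ + ‖projCLM (K n) y' - projCLM K' y'‖) atTop (𝓝 0) := by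
    have h1 := (tendsto_iff_norm_sub_tendsto_zero.1 hy)
    have h2 := (tendsto_iff_norm_sub_tendsto_zero.1 (hstrong y'))
    simpa using h1.add h2
  exact squeeze_zero (fun n => norm_nonneg _) hbound h0

lemma step_lemma (K : ℕ → Submodule ℂ H) [∀ n, Submodule.HasOrthogonalProjection (K n)]
    (K' : Submodule ℂ H) [Submodule.HasOrthogonalProjection K'] (u : ℕ → H) (u' : H)
    [∀ n, Submodule.HasOrthogonalProjection (K n ⊔ (ℂ ∙ u n))]
    [Submodule.HasOrthogonalProjection (K' ⊔ (ℂ ∙ u'))]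
    (hu' : u' ∉ K')
    (hstrong : ∀ x : H, Tendsto (fun n => projCLM (K n) x) atTop (𝓝 (projCLM K' x)))
    (hconv : Tendsto u atTop (𝓝 u')) :
    ∀ x : H, Tendsto (fun n => projCLM (K n ⊔ (ℂ ∙ u n)) x) atTop
      (𝓝 (projCLM (K' ⊔ (ℂ ∙ u')) x)) := by
  intro x
  set w : ℕ → H := fun n => u n - projCLM (K n) (u n) with hw
  set w' : H := u' - projCLM K' u' with hw'
  have hww : Tendsto w atTop (𝓝 w') :=
    hconv.sub (proj_tendsto_joint K K' hstrong hconv)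
  have hw'0 : w' ≠ 0 := by
    intro h
    apply hu'
    have h2 : u' = projCLM K' u' := by rwa [sub_eq_zero] at h
    rw [h2]
    exact projCLM_mem K' u' 
  -- formula for the projections
  have hform : ∀ (M : Submodule ℂ H) [Submodule.HasOrthogonalProjection M] (a : H)
      [Submodule.HasOrthogonalProjection (M ⊔ (ℂ ∙ a))],
      projCLM (M ⊔ (ℂ ∙ a)) x = projCLM M x
        + ((inner ℂ (a - projCLM M a) x : ℂ) / ((‖a - projCLM M a‖ ^ 2 : ℝ) : ℂ))
          • (a - projCLM M a) := by
    intro M _ a _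
    haveI := hasOP_sup_orth M (sub_projCLM_mem_orth M a)
    have h1 : projCLM (M ⊔ (ℂ ∙ a)) x = projCLM (M ⊔ (ℂ ∙ (a - projCLM M a))) x := by
      rw [projCLM_congr (sup_span_eq M a)]
    rw [h1, proj_sup M (sub_projCLM_mem_orth M a) x]
    congr 1
    exact Submodule.starProjection_singleton ℂ x
  have hform' := hform K' u'
  have hformn : ∀ n, projCLM (K n ⊔ (ℂ ∙ u n)) x = projCLM (K n) x
      + ((inner ℂ (w n) x : ℂ) / ((‖w n‖ ^ 2 : ℝ) : ℂ)) • w n := fun n => hform (K n) (u n)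
  rw [hform']
  simp only [hformn]
  refine (hstrong x).add ?_
  have hinner : Tendsto (fun n => (inner ℂ (w n) x : ℂ)) atTop (𝓝 (inner ℂ w' x)) :=
    ((Continuous.inner continuous_id continuous_const).tendsto w').comp hww
  have hnorm : Tendsto (fun n => ((‖w n‖ ^ 2 : ℝ) : ℂ)) atTop (𝓝 ((‖w'‖ ^ 2 : ℝ) : ℂ)) := by
    exact (Complex.continuous_ofReal.tendsto _).comp ((hww.norm).pow 2)
  have hden : ((‖w'‖ ^ 2 : ℝ) : ℂ) ≠ 0 := by
    simp only [ne_eq, Complex.ofReal_eq_zero]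
    exact pow_ne_zero 2 (norm_ne_zero_iff.mpr hw'0)
  exact (hinner.div hnorm hden).smul hww


/-- finite-rank version of STATEMENT 5 for `m` perturbing vectors. -/
theorem stmt6 {m : ℕ} (L : ℕ → Submodule ℂ H) [∀ n, Submodule.HasOrthogonalProjection (L n)]
    (L' : Submodule ℂ H) [Submodule.HasOrthogonalProjection L']
    (v : ℕ → Fin m → H) (v' : Fin m → H)
    [∀ n, Submodule.HasOrthogonalProjection (L n ⊔ Submodule.span ℂ (Set.range (v n)))]
    [Submodule.HasOrthogonalProjection (L' ⊔ Submodule.span ℂ (Set.range v'))]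
    (hindep : ∀ k : Fin m, v' k ∉ L' ⊔ Submodule.span ℂ (v' '' {i | i < k}))
    (hstrong : ∀ x : H, Tendsto (fun n => projCLM (L n) x) atTop (𝓝 (projCLM L' x)))
    (hvconv : ∀ i : Fin m, Tendsto (fun n => v n i) atTop (𝓝 (v' i))) :
    ∀ x : H,
      Tendsto (fun n => projCLM (L n ⊔ Submodule.span ℂ (Set.range (v n))) x) atTop
        (𝓝 (projCLM (L' ⊔ Submodule.span ℂ (Set.range v')) x)) := by
  set S : ℕ → Set (Fin m) := fun k => {i | (i : ℕ) < k} with hS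
  have main : ∀ k : ℕ,
      ∃ (_ : ∀ n, Submodule.HasOrthogonalProjection (L n ⊔ Submodule.span ℂ (v n '' S k)))
        (_ : Submodule.HasOrthogonalProjection (L' ⊔ Submodule.span ℂ (v' '' S k))),
      ∀ x : H, Tendsto (fun n => projCLM (L n ⊔ Submodule.span ℂ (v n '' S k)) x) atTop
        (𝓝 (projCLM (L' ⊔ Submodule.span ℂ (v' '' S k)) x)) := by
    intro k
    induction k with
    | zero =>
      have hS0 : S 0 = ∅ := by ext i; simp [hS]
      have hsub : ∀ (Lx : Submodule ℂ H) (vv : Fin m → H),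
          Lx ⊔ Submodule.span ℂ (vv '' S 0) = Lx := by
        intro Lx vv; rw [hS0]; simp
      haveI h1 : ∀ n, Submodule.HasOrthogonalProjection (L n ⊔ Submodule.span ℂ (v n '' S 0)) :=
        fun n => by rw [hsub]; infer_instance
      haveI h2 : Submodule.HasOrthogonalProjection (L' ⊔ Submodule.span ℂ (v' '' S 0)) := by
        rw [hsub]; infer_instance
      refine ⟨h1, h2, fun x => ?_⟩
      have e' : projCLM (L' ⊔ Submodule.span ℂ (v' '' S 0)) x = projCLM L' x :=
        DFunLike.congr_fun (projCLM_congr (hsub L' v')) x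
      rw [e']
      exact (hstrong x).congr fun n =>
        (DFunLike.congr_fun (projCLM_congr (hsub (L n) (v n))) x).symm
    | succ k ih =>
      obtain ⟨h1, h2, htd⟩ := ih
      haveI := h1; haveI := h2
      by_cases hk : k < m
      · have hSk : S (k + 1) = insert (⟨k, hk⟩ : Fin m) (S k) := by
          ext i
          simp only [hS, Set.mem_setOf_eq, Set.mem_insert_iff, Fin.ext_iff]
          omega
        have hsub : ∀ (Lx : Submodule ℂ H) (vv : Fin m → H),
            Lx ⊔ Submodule.span ℂ (vv '' S (k + 1))
              = (Lx ⊔ Submodule.span ℂ (vv '' S k)) ⊔ (ℂ ∙ vv ⟨k, hk⟩) := by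
          intro Lx vv
          rw [hSk, Set.image_insert_eq, Submodule.span_insert,
            sup_comm (Submodule.span ℂ {vv ⟨k, hk⟩}) (Submodule.span ℂ (vv '' S k)),
            ← sup_assoc]
        haveI h1' : ∀ n, Submodule.HasOrthogonalProjection (L n ⊔ Submodule.span ℂ (v n '' S (k + 1))) :=
          fun n => by rw [hsub]; exact hasOP_sup_singleton _ _
        haveI h2' : Submodule.HasOrthogonalProjection (L' ⊔ Submodule.span ℂ (v' '' S (k + 1))) := by
          rw [hsub]; exact hasOP_sup_singleton _ _
      
        have hind : v' ⟨k, hk⟩ ∉ L' ⊔ Submodule.span ℂ (v' '' S k) := by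
          have hset : {i : Fin m | i < ⟨k, hk⟩} = S k := by
            ext i; simp [hS, Fin.lt_def]
          have := hindep ⟨k, hk⟩
          rwa [hset] at this
        haveI hs1 : ∀ n, Submodule.HasOrthogonalProjection
            ((L n ⊔ Submodule.span ℂ (v n '' S k)) ⊔ (ℂ ∙ v n ⟨k, hk⟩)) :=
          fun n => hasOP_sup_singleton _ _
        haveI hs2 : Submodule.HasOrthogonalProjection
            ((L' ⊔ Submodule.span ℂ (v' '' S k)) ⊔ (ℂ ∙ v' ⟨k, hk⟩)) :=
          hasOP_sup_singleton _ _
        have happ := step_lemma (fun n => L n ⊔ Submodule.span ℂ (v n '' S k))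
          (L' ⊔ Submodule.span ℂ (v' '' S k)) (fun n => v n ⟨k, hk⟩) (v' ⟨k, hk⟩)
          hind htd (hvconv ⟨k, hk⟩)
        refine ⟨h1', h2', fun x => ?_⟩
        have e' : projCLM (L' ⊔ Submodule.span ℂ (v' '' S (k + 1))) x
            = projCLM ((L' ⊔ Submodule.span ℂ (v' '' S k)) ⊔ (ℂ ∙ v' ⟨k, hk⟩)) x :=
          DFunLike.congr_fun (projCLM_congr (hsub L' v')) x
        rw [e']
        exact (happ x).congr fun n =>
          (DFunLike.congr_fun (projCLM_congr (hsub (L n) (v n))) x).symm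
      · have hSk : S (k + 1) = S k := by
          ext i
          simp only [hS, Set.mem_setOf_eq]
          have := i.isLt
          omega
        rw [hSk]
        exact ⟨h1, h2, htd⟩
  obtain ⟨h1, h2, htd⟩ := main m
  haveI := h1; haveI := h2
  have hSm : ∀ (vv : Fin m → H), vv '' S m = Set.range vv := by
    intro vv
    have : S m = Set.univ := by ext i; simp [hS, i.isLt]
    rw [this, Set.image_univ]
  intro x
  have e' : projCLM (L' ⊔ Submodule.span ℂ (Set.range v')) x
      = projCLM (L' ⊔ Submodule.span ℂ (v' '' S m)) x :=
    DFunLike.congr_fun (projCLM_congr ((by rw [hSm v'] :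
      L' ⊔ Submodule.span ℂ (Set.range v') = L' ⊔ Submodule.span ℂ (v' '' S m)))) x
  rw [e']
  exact (htd x).congr fun n =>
    (DFunLike.congr_fun (projCLM_congr (by rw [hSm] : L n ⊔ Submodule.span ℂ (v n '' S m)
      = L n ⊔ Submodule.span ℂ (Set.range (v n)))) x)
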